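/- Two-dimensional discrete convolution estimate: let δ ∈ (0,2] and M ≥ 0. For all n ∈ ℤ² and ρ ∈ [0,δ), Σ_{k+ℓ=n, max{|k|,|ℓ|}≥M} ⟨k⟩^{-δ}⟨ℓ⟩^{-2} ≤ C(δ,ρ) · (log⟨n⟩) / (⟨n⟩^{δ−ρ}⟨M⟩^ρ). -/

import Mathlib

/-- Euclidean norm of a lattice point in `ℤ²`. -/
noncomputable def norm2 (k : ℤ × ℤ) : ℝ :=
  Real.sqrt ((k.1 : ℝ) ^ 2 + (k.2 : ℝ) ^ 2)

/-- Japanese bracket `⟨k⟩ = (1 + |k|²)^{1/2}` of a lattice point in `ℤ²`. -/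
noncomputable def jap2 (k : ℤ × ℤ) : ℝ :=
  Real.sqrt (1 + (k.1 : ℝ) ^ 2 + (k.2 : ℝ) ^ 2)

/-- Japanese bracket `⟨M⟩ = (1 + M²)^{1/2}` of a real number. -/
noncomputable def japR (M : ℝ) : ℝ := Real.sqrt (1 + M ^ 2)

namespace S17

lemma jap2_sq (k : ℤ × ℤ) : jap2 k ^ 2 = 1 + (k.1:ℝ)^2 + (k.2:ℝ)^2 := by
  rw [jap2, Real.sq_sqrt (by positivity)]

lemma one_le_jap2 (k : ℤ × ℤ) : 1 ≤ jap2 k := by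
  rw [jap2]
  calc (1:ℝ) = Real.sqrt 1 := Real.sqrt_one.symm
    _ ≤ _ := Real.sqrt_le_sqrt (by nlinarith [sq_nonneg (k.1:ℝ), sq_nonneg (k.2:ℝ)])

lemma jap2_pos (k : ℤ × ℤ) : 0 < jap2 k := lt_of_lt_of_le one_pos (one_le_jap2 k)

lemma jap2_neg (k : ℤ × ℤ) : jap2 (-k) = jap2 k := by
  simp [jap2]

lemma jap2_triangle (x y : ℤ × ℤ) : jap2 (x + y) ≤ jap2 x + jap2 y := by
  have hx := jap2_sq x
  have hy := jap2_sq y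
  have hx0 := (jap2_pos x).le
  have hy0 := (jap2_pos y).le
  have key : (x.1:ℝ)*y.1 + (x.2:ℝ)*y.2 ≤ jap2 x * jap2 y := by
    rcases le_or_gt ((x.1:ℝ)*y.1 + (x.2:ℝ)*y.2) 0 with h | h
    · exact h.trans (by positivity)
    · nlinarith [sq_nonneg ((x.1:ℝ)*y.2 - (x.2:ℝ)*y.1), mul_nonneg hx0 hy0,
        sq_nonneg (jap2 x * jap2 y - ((x.1:ℝ)*y.1 + (x.2:ℝ)*y.2))]
  have h2 : 1 + ((x.1:ℝ)+(y.1:ℝ))^2 + ((x.2:ℝ)+(y.2:ℝ))^2 ≤ (jap2 x + jap2 y)^2 := by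
    nlinarith [key, hx, hy, mul_nonneg hx0 hy0]
  have h3 : jap2 (x+y) = Real.sqrt (1 + ((x.1:ℝ)+(y.1:ℝ))^2 + ((x.2:ℝ)+(y.2:ℝ))^2) := by
    simp [jap2, Prod.fst_add, Prod.snd_add]
  rw [h3]
  calc Real.sqrt (1 + ((x.1:ℝ)+(y.1:ℝ))^2 + ((x.2:ℝ)+(y.2:ℝ))^2)
      ≤ Real.sqrt ((jap2 x + jap2 y)^2) := Real.sqrt_le_sqrt h2
    _ = jap2 x + jap2 y := Real.sqrt_sq (by positivity)

def mfun (k : ℤ × ℤ) : ℕ := max k.1.natAbs k.2.natAbs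

lemma one_add_mfun_sq_le (k : ℤ × ℤ) : 1 + (mfun k : ℝ)^2 ≤ jap2 k ^ 2 := by
  rw [jap2_sq]
  have h1 : (k.1.natAbs : ℝ)^2 = (k.1:ℝ)^2 := by
    rw [Nat.cast_natAbs]
    push_cast
    rw [sq_abs]
  have h2 : (k.2.natAbs : ℝ)^2 = (k.2:ℝ)^2 := by
    rw [Nat.cast_natAbs]
    push_cast
    rw [sq_abs]
  have : (mfun k : ℝ) = max (k.1.natAbs : ℝ) (k.2.natAbs : ℝ) := by
    simp [mfun, Nat.cast_max]
  rw [this]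
  rcases max_cases (k.1.natAbs : ℝ) (k.2.natAbs : ℝ) with ⟨h, _⟩ | ⟨h, _⟩ <;> rw [h] <;>
    nlinarith [sq_nonneg (k.1:ℝ), sq_nonneg (k.2:ℝ), h1, h2]

lemma mfun_le_jap2 (k : ℤ × ℤ) : (mfun k : ℝ) ≤ jap2 k := by
  have h := one_add_mfun_sq_le k
  nlinarith [jap2_pos k, Nat.cast_nonneg (α := ℝ) (mfun k)]

open Finset in
lemma card_fiber_le (F : Finset (ℤ × ℤ)) (m : ℕ) :
    ((F.filter (fun k => mfun k = m)).card : ℝ) ≤ 8 * m + 1 := by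
  rcases Nat.eq_zero_or_pos m with hm | hm
  · subst hm
    have hsub : F.filter (fun k => mfun k = 0) ⊆ {((0:ℤ),(0:ℤ))} := by
      intro k hk
      have h := (mem_filter.1 hk).2
      simp only [mfun, Nat.max_eq_zero_iff, Int.natAbs_eq_zero] at h
      simp [Prod.ext_iff, h.1, h.2]
    have := card_le_card hsub
    simp only [card_singleton] at this
    push_cast
    norm_num
    exact_mod_cast this
  · obtain ⟨m', rfl⟩ : ∃ m', m = m' + 1 := ⟨m - 1, (Nat.succ_pred_eq_of_pos hm).symm⟩
    have hsub : F.filter (fun k => mfun k = m' + 1) ⊆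
        (Finset.Icc (-(m'+1:ℤ)) (m'+1) ×ˢ Finset.Icc (-(m'+1:ℤ)) (m'+1)) \
        (Finset.Icc (-(m':ℤ)) m' ×ˢ Finset.Icc (-(m':ℤ)) m') := by
      intro k hk
      have h := (Finset.mem_filter.1 hk).2
      have h1 : k.1.natAbs ≤ m' + 1 := by rw [← h]; exact le_max_left _ _
      have h2 : k.2.natAbs ≤ m' + 1 := by rw [← h]; exact le_max_right _ _
      have h3 : k.1.natAbs = m' + 1 ∨ k.2.natAbs = m' + 1 := by
        simp only [mfun] at h
        omega
      simp only [Finset.mem_sdiff, Finset.mem_product, Finset.mem_Icc]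
      omega
    have hinnsub : (Finset.Icc (-(m':ℤ)) m' ×ˢ Finset.Icc (-(m':ℤ)) m') ⊆
        (Finset.Icc (-(m'+1:ℤ)) (m'+1) ×ˢ Finset.Icc (-(m'+1:ℤ)) (m'+1)) := by
      intro k hk
      simp only [Finset.mem_product, Finset.mem_Icc] at *
      omega
    have hb : (Finset.Icc (-(m'+1:ℤ)) (m'+1:ℤ)).card = 2*m'+3 := by
      rw [Int.card_Icc]
      omega
    have hi : (Finset.Icc (-(m':ℤ)) (m':ℤ)).card = 2*m'+1 := by
      rw [Int.card_Icc]
      omega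
    have hcard : (F.filter (fun k => mfun k = m' + 1)).card ≤ 8*(m'+1) := by
      calc (F.filter (fun k => mfun k = m' + 1)).card
          ≤ _ := Finset.card_le_card hsub
        _ = _ - _ := Finset.card_sdiff_of_subset hinnsub
        _ = 8*(m'+1) := by
            rw [Finset.card_product, Finset.card_product, hb, hi]
            ring_nf
            omega
    have : ((F.filter (fun k => mfun k = m' + 1)).card : ℝ) ≤ ((8*(m'+1) : ℕ) : ℝ) := by
      exact_mod_cast hcard
    refine this.trans ?_
    push_cast
    linarith

open Finset in
lemma sum_le_shells (F : Finset (ℤ × ℤ)) (f : ℤ × ℤ → ℝ) (g : ℕ → ℝ)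
    (hg : ∀ m, 0 ≤ g m) (hfg : ∀ k, f k ≤ g (mfun k)) :
    ∃ N : ℕ, ∑ k ∈ F, f k ≤ ∑ m ∈ Finset.range N, (8 * m + 1 : ℝ) * g m := by
  refine ⟨F.sup mfun + 1, ?_⟩
  have hmap : ∀ k ∈ F, mfun k ∈ Finset.range (F.sup mfun + 1) := fun k hk =>
    Finset.mem_range.2 (Nat.lt_succ_of_le (Finset.le_sup hk))
  calc ∑ k ∈ F, f k ≤ ∑ k ∈ F, g (mfun k) := Finset.sum_le_sum (fun k _ => hfg k)
    _ = ∑ m ∈ Finset.range (F.sup mfun + 1),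
          ∑ k ∈ F.filter (fun k => mfun k = m), g (mfun k) :=
        (Finset.sum_fiberwise_of_maps_to hmap _).symm
    _ ≤ ∑ m ∈ Finset.range (F.sup mfun + 1), (8 * m + 1 : ℝ) * g m := by
        refine Finset.sum_le_sum fun m _ => ?_
        have : ∑ k ∈ F.filter (fun k => mfun k = m), g (mfun k)
            = ((F.filter (fun k => mfun k = m)).card : ℝ) * g m := by
          rw [Finset.sum_congr rfl (fun k hk => by rw [(Finset.mem_filter.1 hk).2])]
          rw [Finset.sum_const, nsmul_eq_mul]
        rw [this]
        exact mul_le_mul_of_nonneg_right (card_fiber_le F m) (hg m)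

lemma harmonic_le : ∀ N : ℕ, ∑ m ∈ Finset.range N, (1:ℝ)/(m+1) ≤ 1 + Real.log N := by
  intro N
  induction N with
  | zero => simp
  | succ N ih =>
    rcases Nat.eq_zero_or_pos N with rfl | hN
    · simp
    · rw [Finset.sum_range_succ]
      have hlog : (1:ℝ)/(N+1) ≤ Real.log (N+1) - Real.log N := by
        have hN0 : (0:ℝ) < N := by exact_mod_cast hN
        have h1 : Real.log ((N:ℝ)/(N+1)) ≤ (N:ℝ)/(N+1) - 1 :=
          Real.log_le_sub_one_of_pos (by positivity)
        rw [Real.log_div (by positivity) (by positivity)] at h1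
        have : (N:ℝ)/(N+1) - 1 = -(1/(N+1)) := by field_simp; ring
        rw [this] at h1
        linarith
      have hcast : ((N+1 : ℕ) : ℝ) = (N:ℝ) + 1 := by push_cast; ring
      rw [hcast]
      linarith

lemma rpow_diff (p : ℝ) (hp0 : 0 < p) (hp2 : p ≤ 2) (m : ℕ) (hm : 1 ≤ m) :
    ((m:ℝ)) ^ (-(p+1)) ≤ (8/p) * ((m:ℝ) ^ (-p) - ((m:ℝ)+1) ^ (-p)) := by
  have hm0 : (0:ℝ) < m := by exact_mod_cast hm
  set t : ℝ := 1/(m:ℝ) with ht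
  have ht0 : 0 < t := by positivity
  have ht1 : t ≤ 1 := by
    rw [ht, div_le_one hm0]
    exact_mod_cast hm
  have hlog : t/2 ≤ Real.log (1+t) := by
    have h1 : Real.log (1/(1+t)) ≤ 1/(1+t) - 1 :=
      Real.log_le_sub_one_of_pos (by positivity)
    rw [Real.log_div one_ne_zero (by positivity), Real.log_one] at h1
    have h2 : 1 - 1/(1+t) = t/(1+t) := by field_simp; ring
    have h3 : t/2 ≤ t/(1+t) := by
      rw [div_le_div_iff₀ (by norm_num) (by positivity)]
      nlinarith
    linarith
  have hA1 : 1 + p*t/2 ≤ (1+t) ^ p := by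
    have hexp := Real.add_one_le_exp (Real.log (1+t) * p)
    rw [← Real.rpow_def_of_pos (by positivity : (0:ℝ) < 1+t)] at hexp
    nlinarith [mul_le_mul_of_nonneg_right hlog hp0.le]
  have hA4 : (1+t) ^ p ≤ 4 := by
    calc (1+t) ^ p ≤ (1+t) ^ (2:ℝ) :=
          Real.rpow_le_rpow_of_exponent_le (by linarith) hp2
      _ = (1+t)^(2:ℕ) := by rw [← Real.rpow_natCast (1+t) 2]; norm_num
      _ ≤ 4 := by nlinarith
  have hApos : (0:ℝ) < (1+t) ^ p := Real.rpow_pos_of_pos (by positivity) p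
  have hkey : p*t/8 ≤ 1 - ((1+t) ^ p)⁻¹ := by
    have h4 : 1 - ((1+t) ^ p)⁻¹ = ((1+t) ^ p - 1)/((1+t) ^ p) := by
      rw [eq_div_iff hApos.ne', sub_mul, one_mul, inv_mul_cancel₀ hApos.ne']
    have h5 : (p*t/2)/4 ≤ ((1+t) ^ p - 1)/((1+t) ^ p) :=
      div_le_div₀ (by nlinarith) (by nlinarith) hApos hA4
    rw [h4]
    linarith
  have hsplit : ((m:ℝ)+1) ^ (-p) = (m:ℝ) ^ (-p) * ((1+t) ^ p)⁻¹ := by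
    rw [show (m:ℝ)+1 = (m:ℝ)*(1+t) by rw [ht]; field_simp,
        Real.mul_rpow hm0.le (by positivity),
        Real.rpow_neg (by positivity : (0:ℝ) ≤ 1+t)]
  have hmp : (0:ℝ) < (m:ℝ) ^ (-p) := Real.rpow_pos_of_pos hm0 _
  have hlhs : ((m:ℝ)) ^ (-(p+1)) = (m:ℝ) ^ (-p) * t := by
    rw [show -(p+1) = -p + (-1) by ring, Real.rpow_add hm0, Real.rpow_neg_one, ht]
    ring
  rw [hsplit, hlhs]
  have hfin : (m:ℝ) ^ (-p) * t = (8/p) * ((m:ℝ) ^ (-p) * (p*t/8)) := by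
    field_simp
  rw [hfin]
  have h6 : (m:ℝ) ^ (-p) * (p*t/8) ≤ (m:ℝ) ^ (-p) * (1 - ((1+t) ^ p)⁻¹) :=
    mul_le_mul_of_nonneg_left hkey hmp.le
  have h7 : (m:ℝ) ^ (-p) * (1 - ((1+t) ^ p)⁻¹)
      = (m:ℝ) ^ (-p) - (m:ℝ) ^ (-p) * ((1+t) ^ p)⁻¹ := by ring
  have h8 : (0:ℝ) ≤ 8/p := by positivity
  nlinarith [mul_le_mul_of_nonneg_left h6 h8]

lemma tail_sum (p : ℝ) (hp0 : 0 < p) (hp2 : p ≤ 2) (M N : ℕ) (hM : 1 ≤ M) :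
    ∑ m ∈ Finset.Ico M N, ((m:ℝ)) ^ (-(p+1)) ≤ (8/p) * (M:ℝ) ^ (-p) := by
  have hM0 : (0:ℝ) < M := by exact_mod_cast hM
  set g : ℕ → ℝ := fun m => (8/p) * ((m:ℝ)) ^ (-p) with hg
  have hgnn : ∀ m, 0 ≤ g m := by
    intro m
    rcases Nat.eq_zero_or_pos m with rfl | hm
    · simp only [hg, Nat.cast_zero]
      rw [Real.zero_rpow (ne_of_lt (by linarith : -p < 0))]
      simp
    · have h : (0:ℝ) < m := by exact_mod_cast hm
      have := Real.rpow_pos_of_pos h (-p)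
      positivity
  rcases le_or_gt N M with h | h
  · rw [Finset.Ico_eq_empty (by omega)]
    simp only [Finset.sum_empty]
    have := Real.rpow_pos_of_pos hM0 (-p)
    positivity
  calc ∑ m ∈ Finset.Ico M N, ((m:ℝ)) ^ (-(p+1))
      ≤ ∑ m ∈ Finset.Ico M N, (g m - g (m+1)) := by
        refine Finset.sum_le_sum fun m hm => ?_
        have hm1 : 1 ≤ m := le_trans hM (Finset.mem_Ico.1 hm).1
        have hrd := rpow_diff p hp0 hp2 m hm1
        have hc : ((m+1 : ℕ):ℝ) = (m:ℝ)+1 := by push_cast; ring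
        simp only [hg, hc]
        linarith
    _ = g M - g (M + (N - M)) := by
        rw [Finset.sum_Ico_eq_sum_range]
        have htel := Finset.sum_range_sub' (f := fun i => g (M + i)) (n := N - M)
        simp only [add_zero] at htel
        rw [← htel]
        exact Finset.sum_congr rfl fun i _ => by ring_nf
    _ ≤ g M := by
        rw [Nat.add_sub_cancel' h.le]
        linarith [hgnn N]

lemma jap2_rpow_neg_two (k : ℤ × ℤ) : jap2 k ^ (-(2:ℝ)) = (jap2 k ^ 2)⁻¹ := by
  rw [Real.rpow_neg (jap2_pos k).le]
  congr 1
  rw [show (2:ℝ) = ((2:ℕ):ℝ) by norm_num, Real.rpow_natCast]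

lemma log_two_T (T : ℝ) (hT : 1 ≤ T) : Real.log (2*T) ≤ 1 + Real.log T := by
  rw [Real.log_mul (by norm_num) (by linarith)]
  have := Real.log_le_sub_one_of_pos (by norm_num : (0:ℝ) < 2)
  linarith

lemma sum_japneg2_le (T : ℝ) (hT : 1 ≤ T) (F : Finset (ℤ × ℤ)) :
    ∑ k ∈ F, (if jap2 k ≤ T then jap2 k ^ (-(2:ℝ)) else 0) ≤ 36 * (1 + Real.log T) := by
  have hT0 : (0:ℝ) < T := by linarith
  set g : ℕ → ℝ := fun m => if (m:ℝ) ≤ T then ((1:ℝ)+(m:ℝ)^2)⁻¹ else 0 with hgdef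
  have hg : ∀ m, 0 ≤ g m := by
    intro m
    simp only [hgdef]
    split_ifs
    · positivity
    · exact le_refl 0
  have hfg : ∀ k, (if jap2 k ≤ T then jap2 k ^ (-(2:ℝ)) else 0) ≤ g (mfun k) := by
    intro k
    simp only [hgdef]
    split_ifs with h1 h2
    · rw [jap2_rpow_neg_two]
      apply inv_anti₀ (by positivity) (one_add_mfun_sq_le k)
    · exfalso
      exact h2 ((mfun_le_jap2 k).trans h1)
    · positivity
    · exact le_refl 0
  obtain ⟨N, hN⟩ := sum_le_shells F _ g hg hfg
  refine hN.trans ?_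
  have hpt : ∀ m ∈ Finset.range N, (8*m+1 : ℝ) * g m
      ≤ (if (m:ℝ) ≤ T then (18:ℝ)/((m:ℝ)+1) else 0) := by
    intro m _
    simp only [hgdef]
    split_ifs with h
    · rw [← div_eq_mul_inv, div_le_div_iff₀ (by positivity) (by positivity)]
      nlinarith [sq_nonneg ((m:ℝ) - 1), sq_nonneg (m:ℝ), Nat.cast_nonneg (α := ℝ) m]
    · simp
  refine (Finset.sum_le_sum hpt).trans ?_
  rw [← Finset.sum_filter]
  set K : ℕ := Nat.floor T with hK
  have hsub : (Finset.range N).filter (fun m : ℕ => (m:ℝ) ≤ T) ⊆ Finset.range (K+1) := by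
    intro m hm
    have h1 := (Finset.mem_filter.1 hm).2
    have h2 : m ≤ K := Nat.le_floor h1
    exact Finset.mem_range.2 (by omega)
  calc ∑ m ∈ (Finset.range N).filter (fun m : ℕ => (m:ℝ) ≤ T), (18:ℝ)/((m:ℝ)+1)
      ≤ ∑ m ∈ Finset.range (K+1), (18:ℝ)/((m:ℝ)+1) :=
        Finset.sum_le_sum_of_subset_of_nonneg hsub (fun m _ _ => by positivity)
    _ = 18 * ∑ m ∈ Finset.range (K+1), (1:ℝ)/((m:ℝ)+1) := by
        rw [Finset.mul_sum]
        exact Finset.sum_congr rfl fun m _ => by ring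
    _ ≤ 18 * (1 + Real.log ((K+1 : ℕ):ℝ)) := by
        have := harmonic_le (K+1)
        have h18 : (0:ℝ) ≤ 18 := by norm_num
        exact mul_le_mul_of_nonneg_left this h18
    _ ≤ 36 * (1 + Real.log T) := by
        have h1 : ((K+1 : ℕ):ℝ) ≤ 2*T := by
          push_cast
          have := Nat.floor_le hT0.le (R := ℝ) (a := T)
          linarith
        have h2 : Real.log ((K+1 : ℕ):ℝ) ≤ Real.log (2*T) :=
          Real.log_le_log (by positivity) h1
        have h3 := log_two_T T hT
        have h4 : 0 ≤ Real.log T := Real.log_nonneg hT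
        linarith

lemma sum_jap_tail_le (c : ℝ) (hc2 : 2 < c) (hc4 : c ≤ 4) (U : ℝ) (hU : 1 ≤ U)
    (F : Finset (ℤ × ℤ)) :
    ∑ k ∈ F, (if U ≤ jap2 k then jap2 k ^ (-c) else 0)
      ≤ (18 + 72/(c-2)) * U ^ (2-c) := by
  have hU0 : (0:ℝ) < U := by linarith
  set p : ℝ := c - 2 with hp
  have hp0 : 0 < p := by rw [hp]; linarith
  have hp2 : p ≤ 2 := by rw [hp]; linarith
  set g : ℕ → ℝ := fun m => (max U (m:ℝ)) ^ (-c) with hgdef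
  have hmaxpos : ∀ m : ℕ, (0:ℝ) < max U (m:ℝ) := fun m => lt_of_lt_of_le hU0 (le_max_left _ _)
  have hg : ∀ m, 0 ≤ g m := fun m => (Real.rpow_pos_of_pos (hmaxpos m) _).le
  have hfg : ∀ k, (if U ≤ jap2 k then jap2 k ^ (-c) else 0) ≤ g (mfun k) := by
    intro k
    simp only [hgdef]
    split_ifs with h1
    · apply Real.rpow_le_rpow_of_nonpos (hmaxpos _)
      · exact max_le h1 (mfun_le_jap2 k)
      · linarith
    · exact hg _
  obtain ⟨N, hN⟩ := sum_le_shells F _ g hg hfg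
  refine hN.trans ?_
  set K : ℕ := Nat.floor U with hK
  have hK1 : 1 ≤ K := Nat.le_floor (by exact_mod_cast hU)
  have hKU : (K:ℝ) ≤ U := Nat.floor_le hU0.le
  have hUK1 : U < (K:ℝ) + 1 := Nat.lt_floor_add_one U
  rw [← Finset.sum_filter_add_sum_filter_not (Finset.range N) (fun m => m ≤ K)]
  have hUpow : U ^ (2:ℝ) * U ^ (-c) = U ^ (2-c) := by
    rw [← Real.rpow_add hU0]
    ring_nf
  have hA : ∑ m ∈ (Finset.range N).filter (fun m => m ≤ K), (8*m+1 : ℝ) * g m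
      ≤ 18 * U ^ (2-c) := by
    have hbd : ∀ m ∈ (Finset.range N).filter (fun m => m ≤ K),
        (8*m+1 : ℝ) * g m ≤ 9*U * U ^ (-c) := by
      intro m hm
      have hmK : m ≤ K := (Finset.mem_filter.1 hm).2
      have hmU : (m:ℝ) ≤ U := le_trans (by exact_mod_cast hmK) hKU
      have hmax : max U (m:ℝ) = U := max_eq_left hmU
      simp only [hgdef, hmax]
      apply mul_le_mul_of_nonneg_right _ (Real.rpow_pos_of_pos hU0 _).le
      have : (m:ℝ) ≤ U := hmU
      nlinarith
    calc ∑ m ∈ (Finset.range N).filter (fun m => m ≤ K), (8*m+1 : ℝ) * g m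
        ≤ ∑ _m ∈ (Finset.range N).filter (fun m => m ≤ K), 9*U * U ^ (-c) :=
          Finset.sum_le_sum hbd
      _ = ((Finset.range N).filter (fun m => m ≤ K)).card * (9*U * U ^ (-c)) := by
          rw [Finset.sum_const, nsmul_eq_mul]
      _ ≤ (2*U) * (9*U * U ^ (-c)) := by
          apply mul_le_mul_of_nonneg_right _ (by positivity)
          have hsub : (Finset.range N).filter (fun m => m ≤ K) ⊆ Finset.range (K+1) :=
            fun m hm => Finset.mem_range.2 (by
              have := (Finset.mem_filter.1 hm).2
              omega)
          have := Finset.card_le_card hsub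
          rw [Finset.card_range] at this
          calc (((Finset.range N).filter (fun m => m ≤ K)).card : ℝ) ≤ ((K+1 : ℕ):ℝ) := by
                exact_mod_cast this
            _ ≤ 2*U := by push_cast; linarith
      _ = 18 * (U ^ (2:ℝ) * U ^ (-c)) := by
          rw [show U ^ (2:ℝ) = U * U by
            rw [show (2:ℝ) = ((2:ℕ):ℝ) by norm_num, Real.rpow_natCast]; ring]
          ring
      _ = 18 * U ^ (2-c) := by rw [hUpow]
  have hB : ∑ m ∈ (Finset.range N).filter (fun m => ¬ m ≤ K), (8*m+1 : ℝ) * g m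
      ≤ (72/p) * U ^ (2-c) := by
    have hbd : ∀ m ∈ (Finset.range N).filter (fun m => ¬ m ≤ K),
        (8*m+1 : ℝ) * g m ≤ 9 * (m:ℝ) ^ (-(p+1)) := by
      intro m hm
      have hmK : ¬ m ≤ K := (Finset.mem_filter.1 hm).2
      have hm1 : K + 1 ≤ m := by omega
      have hmU : U ≤ (m:ℝ) := by
        have : ((K+1 : ℕ):ℝ) ≤ (m:ℝ) := by exact_mod_cast hm1
        push_cast at this
        linarith
      have hm0 : (0:ℝ) < m := lt_of_lt_of_le hU0 hmU
      have hmax : max U (m:ℝ) = (m:ℝ) := max_eq_right hmU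
      simp only [hgdef, hmax]
      have hexp : ((m:ℝ)) ^ (-(p+1)) = (m:ℝ) * (m:ℝ) ^ (-c) := by
        rw [show -(p+1) = 1 + (-c) by rw [hp]; ring, Real.rpow_add hm0, Real.rpow_one]
      rw [hexp]
      have h9 : (8*m+1 : ℝ) ≤ 9 * (m:ℝ) := by
        have : (1:ℝ) ≤ (m:ℝ) := by
          have : (1:ℕ) ≤ m := by omega
          exact_mod_cast this
        linarith
      calc (8*m+1 : ℝ) * (m:ℝ) ^ (-c) ≤ 9*(m:ℝ) * (m:ℝ) ^ (-c) :=
            mul_le_mul_of_nonneg_right h9 (Real.rpow_pos_of_pos hm0 _).le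
        _ = 9 * ((m:ℝ) * (m:ℝ) ^ (-c)) := by ring
    have hsub : (Finset.range N).filter (fun m => ¬ m ≤ K) ⊆ Finset.Ico (K+1) N := by
      intro m hm
      have h1 := Finset.mem_range.1 (Finset.mem_filter.1 hm).1
      have h2 := (Finset.mem_filter.1 hm).2
      exact Finset.mem_Ico.2 ⟨by omega, h1⟩
    calc ∑ m ∈ (Finset.range N).filter (fun m => ¬ m ≤ K), (8*m+1 : ℝ) * g m
        ≤ ∑ m ∈ (Finset.range N).filter (fun m => ¬ m ≤ K), 9 * (m:ℝ) ^ (-(p+1)) :=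
          Finset.sum_le_sum hbd
      _ ≤ ∑ m ∈ Finset.Ico (K+1) N, 9 * (m:ℝ) ^ (-(p+1)) := by
          apply Finset.sum_le_sum_of_subset_of_nonneg hsub
          intro m hm _
          have hm0 : (0:ℝ) < m := by
            have : K + 1 ≤ m := (Finset.mem_Ico.1 hm).1
            have : (1:ℕ) ≤ m := by omega
            exact_mod_cast lt_of_lt_of_le one_pos (by exact_mod_cast this)
          positivity
      _ = 9 * ∑ m ∈ Finset.Ico (K+1) N, (m:ℝ) ^ (-(p+1)) := by rw [Finset.mul_sum]
      _ ≤ 9 * ((8/p) * ((K+1 : ℕ):ℝ) ^ (-p)) := by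
          apply mul_le_mul_of_nonneg_left _ (by norm_num)
          exact tail_sum p hp0 hp2 (K+1) N (by omega)
      _ ≤ (72/p) * U ^ (2-c) := by
          have h1 : ((K+1 : ℕ):ℝ) ^ (-p) ≤ U ^ (-p) := by
            apply Real.rpow_le_rpow_of_nonpos hU0 _ (by linarith)
            push_cast
            linarith
          have h2 : U ^ (-p) = U ^ (2-c) := by rw [hp]; ring_nf
          rw [h2] at h1
          calc 9 * ((8/p) * ((K+1 : ℕ):ℝ) ^ (-p)) = (72/p) * ((K+1 : ℕ):ℝ) ^ (-p) := by ring
            _ ≤ (72/p) * U ^ (2-c) := mul_le_mul_of_nonneg_left h1 (by positivity)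
  have hfin : 18 * U ^ (2-c) + (72/p) * U ^ (2-c) = (18 + 72/(c-2)) * U ^ (2-c) := by
    rw [hp]
    ring
  linarith [hA, hB]

lemma rpow_two_eq (x : ℝ) (hx : 0 ≤ x) : x ^ (2:ℝ) = x * x := by
  rw [show (2:ℝ) = ((2:ℕ):ℝ) by norm_num, Real.rpow_natCast]
  ring

lemma conv_bound (a b : ℝ) (ha0 : 0 < a) (ha2 : a ≤ 2) (hb0 : 0 < b) (hb2 : b ≤ 2)
    (hab : 2 < a + b) :
    ∃ C : ℝ, 0 < C ∧ ∀ (n : ℤ × ℤ) (F : Finset (ℤ × ℤ)),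
      ∑ k ∈ F, jap2 k ^ (-a) * jap2 (n - k) ^ (-b)
        ≤ C * (1 + Real.log (jap2 n)) * jap2 n ^ (2 - (a+b)) := by
  have hs2 : 0 < a + b - 2 := by linarith
  have hs4 : a + b ≤ 4 := by linarith
  have hCc : (0:ℝ) < 18 + 72/(a+b-2) := by positivity
  refine ⟨288 + 36*(18 + 72/(a+b-2)), by positivity, fun n F => ?_⟩
  set T : ℝ := jap2 n with hTdef
  have hT : 1 ≤ T := one_le_jap2 n
  have hT0 : (0:ℝ) < T := by linarith
  set L : ℝ := 1 + Real.log T with hLdef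
  have hL1 : 1 ≤ L := by
    have := Real.log_nonneg hT
    rw [hLdef]; linarith
  have hL0 : 0 < L := by linarith
  set q : ℝ := 2 - (a+b) with hqdef
  have hTq : (0:ℝ) < T ^ q := Real.rpow_pos_of_pos hT0 q
  set h1 : (ℤ×ℤ) → ℝ := fun k => if jap2 k ≤ T then jap2 k ^ (-(2:ℝ)) else 0 with h1def
  set h2 : (ℤ×ℤ) → ℝ := fun k => if jap2 (n-k) ≤ T then jap2 (n-k) ^ (-(2:ℝ)) else 0 with h2def
  set h3 : (ℤ×ℤ) → ℝ := fun k =>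
    if max (T/2) 1 ≤ jap2 k then jap2 k ^ (-(a+b)) else 0 with h3def
  have h1nn : ∀ k, 0 ≤ h1 k := by
    intro k; simp only [h1def]; split_ifs
    · exact (Real.rpow_pos_of_pos (jap2_pos k) _).le
    · exact le_refl 0
  have h2nn : ∀ k, 0 ≤ h2 k := by
    intro k; simp only [h2def]; split_ifs
    · exact (Real.rpow_pos_of_pos (jap2_pos (n-k)) _).le
    · exact le_refl 0
  have h3nn : ∀ k, 0 ≤ h3 k := by
    intro k; simp only [h3def]; split_ifs
    · exact (Real.rpow_pos_of_pos (jap2_pos k) _).le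
    · exact le_refl 0
  set c1 : ℝ := (2:ℝ)^(b:ℝ) * T ^ q with hc1def
  set c2 : ℝ := (2:ℝ)^(a:ℝ) * T ^ q with hc2def
  set c3 : ℝ := (3:ℝ)^(b:ℝ) with hc3def
  have h2b : (2:ℝ)^(b:ℝ) ≤ 4 := by
    calc (2:ℝ)^(b:ℝ) ≤ (2:ℝ)^(2:ℝ) := Real.rpow_le_rpow_of_exponent_le one_le_two hb2
      _ = 4 := by rw [rpow_two_eq 2 (by norm_num)]; norm_num
  have h2a : (2:ℝ)^(a:ℝ) ≤ 4 := by
    calc (2:ℝ)^(a:ℝ) ≤ (2:ℝ)^(2:ℝ) := Real.rpow_le_rpow_of_exponent_le one_le_two ha2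
      _ = 4 := by rw [rpow_two_eq 2 (by norm_num)]; norm_num
  have h3b : (3:ℝ)^(b:ℝ) ≤ 9 := by
    calc (3:ℝ)^(b:ℝ) ≤ (3:ℝ)^(2:ℝ) :=
          Real.rpow_le_rpow_of_exponent_le (by norm_num) hb2
      _ = 9 := by rw [rpow_two_eq 3 (by norm_num)]; norm_num
  have hc1pos : 0 < c1 := by
    rw [hc1def]
    exact mul_pos (Real.rpow_pos_of_pos (by norm_num) _) hTq
  have hc2pos : 0 < c2 := by
    rw [hc2def]
    exact mul_pos (Real.rpow_pos_of_pos (by norm_num) _) hTq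
  have hc3pos : 0 < c3 := Real.rpow_pos_of_pos (by norm_num) _
  -- pointwise bound
  have hpt : ∀ k : ℤ × ℤ, jap2 k ^ (-a) * jap2 (n - k) ^ (-b)
      ≤ c1 * h1 k + c2 * h2 k + c3 * h3 k := by
    intro k
    have hk1 : 1 ≤ jap2 k := one_le_jap2 k
    have hk0 : 0 < jap2 k := jap2_pos k
    have hnk0 : 0 < jap2 (n-k) := jap2_pos (n-k)
    have hnk1 : 1 ≤ jap2 (n-k) := one_le_jap2 (n-k)
    have htri1 : T ≤ jap2 k + jap2 (n-k) := by
      have h := jap2_triangle k (n-k)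
      rw [show k + (n - k) = n by ring] at h
      exact h
    have htri2 : jap2 k ≤ T + jap2 (n-k) := by
      have h := jap2_triangle n (k-n)
      rw [show n + (k - n) = k by ring] at h
      rw [show k - n = -(n-k) by ring, jap2_neg] at h
      exact h
    rcases le_or_gt (2 * jap2 k) T with hca | hca
    · -- region 1
      have hkT : jap2 k ≤ T := by linarith
      have hnkT2 : T/2 ≤ jap2 (n-k) := by linarith
      have e1 : jap2 k ^ (-a) ≤ T ^ (2-a) * jap2 k ^ (-(2:ℝ)) := by
        have : jap2 k ^ (-a) = jap2 k ^ (2-a) * jap2 k ^ (-(2:ℝ)) := by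
          rw [← Real.rpow_add hk0]; ring_nf
        rw [this]
        apply mul_le_mul_of_nonneg_right _ (Real.rpow_pos_of_pos hk0 _).le
        exact Real.rpow_le_rpow hk0.le hkT (by linarith)
      have e2 : jap2 (n-k) ^ (-b) ≤ (T/2) ^ (-b) :=
        Real.rpow_le_rpow_of_nonpos (by linarith) hnkT2 (by linarith)
      have e3 : (T/2) ^ (-b) = (2:ℝ)^(b:ℝ) * T ^ (-b) := by
        rw [Real.div_rpow hT0.le (by norm_num : (0:ℝ) ≤ 2), div_eq_mul_inv,
            ← Real.rpow_neg (by norm_num : (0:ℝ) ≤ 2)]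
        ring_nf
      have e4 : jap2 k ^ (-a) * jap2 (n - k) ^ (-b)
          ≤ (T ^ (2-a) * jap2 k ^ (-(2:ℝ))) * ((2:ℝ)^(b:ℝ) * T ^ (-b)) := by
        rw [← e3]
        exact mul_le_mul e1 e2 (Real.rpow_pos_of_pos hnk0 _).le
          (by positivity)
      have e5 : (T ^ (2-a) * jap2 k ^ (-(2:ℝ))) * ((2:ℝ)^(b:ℝ) * T ^ (-b))
          = c1 * jap2 k ^ (-(2:ℝ)) := by
        rw [hc1def, hqdef]
        rw [show T ^ (2-a) * jap2 k ^ (-(2:ℝ)) * ((2:ℝ)^(b:ℝ) * T ^ (-b))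
            = ((2:ℝ)^(b:ℝ)) * (T ^ (2-a) * T ^ (-b)) * jap2 k ^ (-(2:ℝ)) by ring,
          ← Real.rpow_add hT0]
        ring_nf
      have hh1 : h1 k = jap2 k ^ (-(2:ℝ)) := by
        simp only [h1def]
        rw [if_pos hkT]
      calc jap2 k ^ (-a) * jap2 (n - k) ^ (-b) ≤ c1 * jap2 k ^ (-(2:ℝ)) := by
            rw [← e5]; exact e4
        _ = c1 * h1 k := by rw [hh1]
        _ ≤ c1 * h1 k + c2 * h2 k + c3 * h3 k := by
            have := mul_nonneg hc2pos.le (h2nn k)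
            have := mul_nonneg hc3pos.le (h3nn k)
            linarith
    rcases le_or_gt (2 * jap2 (n-k)) T with hcb | hcb
    · -- region 2
      have hkT : jap2 (n-k) ≤ T := by linarith
      have hkT2 : T/2 ≤ jap2 k := by linarith
      have e1 : jap2 (n-k) ^ (-b) ≤ T ^ (2-b) * jap2 (n-k) ^ (-(2:ℝ)) := by
        have : jap2 (n-k) ^ (-b) = jap2 (n-k) ^ (2-b) * jap2 (n-k) ^ (-(2:ℝ)) := by
          rw [← Real.rpow_add hnk0]; ring_nf
        rw [this]
        apply mul_le_mul_of_nonneg_right _ (Real.rpow_pos_of_pos hnk0 _).le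
        exact Real.rpow_le_rpow hnk0.le hkT (by linarith)
      have e2 : jap2 k ^ (-a) ≤ (T/2) ^ (-a) :=
        Real.rpow_le_rpow_of_nonpos (by linarith) hkT2 (by linarith)
      have e3 : (T/2) ^ (-a) = (2:ℝ)^(a:ℝ) * T ^ (-a) := by
        rw [Real.div_rpow hT0.le (by norm_num : (0:ℝ) ≤ 2), div_eq_mul_inv,
            ← Real.rpow_neg (by norm_num : (0:ℝ) ≤ 2)]
        ring_nf
      have e4 : jap2 k ^ (-a) * jap2 (n - k) ^ (-b)
          ≤ ((2:ℝ)^(a:ℝ) * T ^ (-a)) * (T ^ (2-b) * jap2 (n-k) ^ (-(2:ℝ))) := by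
        rw [← e3]
        exact mul_le_mul e2 e1 (by positivity) (by positivity)
      have e5 : ((2:ℝ)^(a:ℝ) * T ^ (-a)) * (T ^ (2-b) * jap2 (n-k) ^ (-(2:ℝ)))
          = c2 * jap2 (n-k) ^ (-(2:ℝ)) := by
        rw [hc2def, hqdef]
        rw [show ((2:ℝ)^(a:ℝ) * T ^ (-a)) * (T ^ (2-b) * jap2 (n-k) ^ (-(2:ℝ)))
            = ((2:ℝ)^(a:ℝ)) * (T ^ (-a) * T ^ (2-b)) * jap2 (n-k) ^ (-(2:ℝ)) by ring,
          ← Real.rpow_add hT0]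
        ring_nf
      have hh2 : h2 k = jap2 (n-k) ^ (-(2:ℝ)) := by
        simp only [h2def]
        rw [if_pos hkT]
      calc jap2 k ^ (-a) * jap2 (n - k) ^ (-b) ≤ c2 * jap2 (n-k) ^ (-(2:ℝ)) := by
            rw [← e5]; exact e4
        _ = c2 * h2 k := by rw [hh2]
        _ ≤ c1 * h1 k + c2 * h2 k + c3 * h3 k := by
            have := mul_nonneg hc1pos.le (h1nn k)
            have := mul_nonneg hc3pos.le (h3nn k)
            linarith
    · -- region 3
      have hcond : max (T/2) 1 ≤ jap2 k := max_le (by linarith) hk1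
      have hthird : jap2 k / 3 ≤ jap2 (n-k) := by linarith
      have e2 : jap2 (n-k) ^ (-b) ≤ (jap2 k / 3) ^ (-b) :=
        Real.rpow_le_rpow_of_nonpos (by linarith) hthird (by linarith)
      have e3 : (jap2 k / 3) ^ (-b) = (3:ℝ)^(b:ℝ) * jap2 k ^ (-b) := by
        rw [Real.div_rpow hk0.le (by norm_num : (0:ℝ) ≤ 3), div_eq_mul_inv,
            ← Real.rpow_neg (by norm_num : (0:ℝ) ≤ 3)]
        ring_nf
      have e4 : jap2 k ^ (-a) * jap2 (n - k) ^ (-b)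
          ≤ jap2 k ^ (-a) * ((3:ℝ)^(b:ℝ) * jap2 k ^ (-b)) := by
        rw [← e3]
        exact mul_le_mul_of_nonneg_left (e2) (by positivity)
      have e5 : jap2 k ^ (-a) * ((3:ℝ)^(b:ℝ) * jap2 k ^ (-b))
          = c3 * jap2 k ^ (-(a+b)) := by
        rw [hc3def, show jap2 k ^ (-a) * ((3:ℝ)^(b:ℝ) * jap2 k ^ (-b))
            = (3:ℝ)^(b:ℝ) * (jap2 k ^ (-a) * jap2 k ^ (-b)) by ring,
          ← Real.rpow_add hk0]
        ring_nf
      have hh3 : h3 k = jap2 k ^ (-(a+b)) := by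
        simp only [h3def]
        rw [if_pos hcond]
      calc jap2 k ^ (-a) * jap2 (n - k) ^ (-b) ≤ c3 * jap2 k ^ (-(a+b)) := by
            rw [← e5]; exact e4
        _ = c3 * h3 k := by rw [hh3]
        _ ≤ c1 * h1 k + c2 * h2 k + c3 * h3 k := by
            have := mul_nonneg hc1pos.le (h1nn k)
            have := mul_nonneg hc2pos.le (h2nn k)
            linarith
  -- sum bounds
  have hS1 : ∑ k ∈ F, h1 k ≤ 36 * L := by
    rw [hLdef]
    exact sum_japneg2_le T hT F
  have hS2 : ∑ k ∈ F, h2 k ≤ 36 * L := by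
    have hinj : ∀ x ∈ F, ∀ y ∈ F, n - x = n - y → x = y := by
      intro x _ y _ h
      have h2 := congrArg (fun z => n - z) h
      simpa using h2
    have e : ∑ k ∈ F, h2 k = ∑ l ∈ F.image (fun k => n - k), h1 l := by
      rw [Finset.sum_image hinj]
    rw [e, hLdef]
    simp only [h1def]
    exact sum_japneg2_le T hT _
  have hS3 : ∑ k ∈ F, h3 k ≤ (18 + 72/(a+b-2)) * (4 * T ^ q) := by
    have hU1 : (1:ℝ) ≤ max (T/2) 1 := le_max_right _ _
    have hU0 : (0:ℝ) < max (T/2) 1 := by linarith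
    have h := sum_jap_tail_le (a+b) hab hs4 (max (T/2) 1) hU1 F
    refine le_trans h ?_
    apply mul_le_mul_of_nonneg_left _ hCc.le
    -- (max (T/2) 1) ^ (2-(a+b)) ≤ 4 * T ^ q
    have h1' : (max (T/2) 1) ^ (2-(a+b)) ≤ (T/2) ^ (2-(a+b)) :=
      Real.rpow_le_rpow_of_nonpos (by positivity) (le_max_left _ _) (by linarith)
    have h2' : (T/2) ^ (2-(a+b)) = (2:ℝ)^((a+b)-2) * T ^ q := by
      rw [Real.div_rpow hT0.le (by norm_num : (0:ℝ) ≤ 2), div_eq_mul_inv,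
          ← Real.rpow_neg (by norm_num : (0:ℝ) ≤ 2), hqdef]
      ring_nf
    have h3' : (2:ℝ)^((a+b)-2) ≤ 4 := by
      calc (2:ℝ)^((a+b)-2) ≤ (2:ℝ)^(2:ℝ) :=
            Real.rpow_le_rpow_of_exponent_le one_le_two (by linarith)
        _ = 4 := by rw [rpow_two_eq 2 (by norm_num)]; norm_num
    calc (max (T/2) 1) ^ (2-(a+b)) ≤ (2:ℝ)^((a+b)-2) * T ^ q := by rw [← h2']; exact h1'
      _ ≤ 4 * T ^ q := mul_le_mul_of_nonneg_right h3' hTq.le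
  -- combine
  calc ∑ k ∈ F, jap2 k ^ (-a) * jap2 (n - k) ^ (-b)
      ≤ ∑ k ∈ F, (c1 * h1 k + c2 * h2 k + c3 * h3 k) :=
        Finset.sum_le_sum fun k _ => hpt k
    _ = c1 * (∑ k ∈ F, h1 k) + c2 * (∑ k ∈ F, h2 k) + c3 * (∑ k ∈ F, h3 k) := by
        rw [Finset.sum_add_distrib, Finset.sum_add_distrib, Finset.mul_sum,
          Finset.mul_sum, Finset.mul_sum]
    _ ≤ c1 * (36 * L) + c2 * (36 * L) + c3 * ((18 + 72/(a+b-2)) * (4 * T ^ q)) := by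
        have b1 := mul_le_mul_of_nonneg_left hS1 hc1pos.le
        have b2 := mul_le_mul_of_nonneg_left hS2 hc2pos.le
        have b3 := mul_le_mul_of_nonneg_left hS3 hc3pos.le
        exact add_le_add (add_le_add b1 b2) b3
    _ ≤ (288 + 36*(18 + 72/(a+b-2))) * L * T ^ q := by
        have h36L : (0:ℝ) ≤ 36 * L := by linarith
        have t1 : c1 * (36 * L) ≤ 144 * L * T ^ q := by
          calc c1 * (36 * L) = (2:ℝ)^(b:ℝ) * T ^ q * (36 * L) := by rw [hc1def]
            _ ≤ 4 * T ^ q * (36 * L) :=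
                mul_le_mul_of_nonneg_right (mul_le_mul_of_nonneg_right h2b hTq.le) h36L
            _ = 144 * L * T ^ q := by ring
        have t2 : c2 * (36 * L) ≤ 144 * L * T ^ q := by
          calc c2 * (36 * L) = (2:ℝ)^(a:ℝ) * T ^ q * (36 * L) := by rw [hc2def]
            _ ≤ 4 * T ^ q * (36 * L) :=
                mul_le_mul_of_nonneg_right (mul_le_mul_of_nonneg_right h2a hTq.le) h36L
            _ = 144 * L * T ^ q := by ring
        have t3 : c3 * ((18 + 72/(a+b-2)) * (4 * T ^ q))
            ≤ 36*(18 + 72/(a+b-2)) * L * T ^ q := by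
          calc c3 * ((18 + 72/(a+b-2)) * (4 * T ^ q))
              ≤ 9 * ((18 + 72/(a+b-2)) * (4 * T ^ q)) := by
                rw [hc3def]
                exact mul_le_mul_of_nonneg_right h3b
                  (mul_nonneg hCc.le (mul_nonneg (by norm_num) hTq.le))
            _ = (36*(18 + 72/(a+b-2))) * 1 * T ^ q := by ring
            _ ≤ (36*(18 + 72/(a+b-2))) * L * T ^ q := by
                apply mul_le_mul_of_nonneg_right _ hTq.le
                exact mul_le_mul_of_nonneg_left hL1
                  (mul_nonneg (by norm_num) hCc.le)
        calc c1 * (36 * L) + c2 * (36 * L) + c3 * ((18 + 72/(a+b-2)) * (4 * T ^ q))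
            ≤ 144*L*T^q + 144*L*T^q + 36*(18 + 72/(a+b-2))*L*T^q :=
              add_le_add (add_le_add t1 t2) t3
          _ = (288 + 36*(18 + 72/(a+b-2))) * L * T ^ q := by ring

lemma one_le_japR (M : ℝ) : 1 ≤ japR M := by
  rw [japR]
  calc (1:ℝ) = Real.sqrt 1 := Real.sqrt_one.symm
    _ ≤ _ := Real.sqrt_le_sqrt (by nlinarith [sq_nonneg M])

lemma japR_pos (M : ℝ) : 0 < japR M := lt_of_lt_of_le one_pos (one_le_japR M)

lemma jap2_eq_japR_norm2 (k : ℤ × ℤ) : jap2 k = japR (norm2 k) := by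
  rw [jap2, japR, norm2, Real.sq_sqrt (by positivity)]
  ring_nf

lemma japR_mono {M M' : ℝ} (hM : 0 ≤ M) (h : M ≤ M') : japR M ≤ japR M' := by
  rw [japR, japR]
  exact Real.sqrt_le_sqrt (by nlinarith)

end S17

/-- two-dimensional discrete convolution estimate. For
`δ ∈ (0,2]`, `M ≥ 0`, `ρ ∈ [0,δ)` and all `n ∈ ℤ²`,
`Σ_{k+ℓ=n, max{|k|,|ℓ|}≥M} ⟨k⟩^{-δ} ⟨ℓ⟩^{-2} ≤ C(δ,ρ) log⟨n⟩ / (⟨n⟩^{δ−ρ} ⟨M⟩^ρ)`,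
where `log⟨n⟩` is understood to be bounded below by a positive constant
(formalized as `1 + log⟨n⟩`). -/
theorem stmt17 (δ ρ : ℝ) (hδ0 : 0 < δ) (hδ2 : δ ≤ 2) (hρ0 : 0 ≤ ρ) (hρδ : ρ < δ) :
    ∃ C : ℝ, 0 < C ∧ ∀ (n : ℤ × ℤ) (M : ℝ), 0 ≤ M →
      (∑' k : ℤ × ℤ,
        Set.indicator {k : ℤ × ℤ | M ≤ max (norm2 k) (norm2 (n - k))}
          (fun k => jap2 k ^ (-δ) * jap2 (n - k) ^ (-(2 : ℝ))) k)
        ≤ C * (1 + Real.log (jap2 n)) / (jap2 n ^ (δ - ρ) * japR M ^ ρ) := by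
  classical
  obtain ⟨C₁, hC₁, H₁⟩ := S17.conv_bound (δ - ρ) 2 (by linarith) (by linarith)
    (by norm_num) (by norm_num) (by linarith)
  obtain ⟨C₂, hC₂, H₂⟩ := S17.conv_bound δ (2 - ρ) hδ0 hδ2 (by linarith) (by linarith)
    (by linarith)
  refine ⟨C₁ + C₂, by linarith, fun n M hM => ?_⟩
  set T : ℝ := jap2 n with hTdef
  have hT : 1 ≤ T := S17.one_le_jap2 n
  have hT0 : (0:ℝ) < T := by linarith
  set L : ℝ := 1 + Real.log T with hLdef
  have hL1 : 1 ≤ L := by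
    have := Real.log_nonneg hT
    rw [hLdef]; linarith
  set W : ℝ := japR M with hWdef
  have hW1 : 1 ≤ W := S17.one_le_japR M
  have hW0 : (0:ℝ) < W := by linarith
  have hTdr : (0:ℝ) < T ^ (δ - ρ) := Real.rpow_pos_of_pos hT0 _
  have hWr : (0:ℝ) < W ^ ρ := Real.rpow_pos_of_pos hW0 _
  have hWnr : (0:ℝ) < W ^ (-ρ) := Real.rpow_pos_of_pos hW0 _
  have hRHS0 : 0 ≤ (C₁ + C₂) * L / (T ^ (δ - ρ) * W ^ ρ) := by
    apply div_nonneg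
    · nlinarith
    · positivity
  apply tsum_le_of_sum_le' hRHS0
  intro u
  set f1 : (ℤ × ℤ) → ℝ := fun k => jap2 k ^ (-(δ - ρ)) * jap2 (n - k) ^ (-(2:ℝ)) with hf1
  set f2 : (ℤ × ℤ) → ℝ := fun k => jap2 k ^ (-δ) * jap2 (n - k) ^ (-(2 - ρ)) with hf2
  have hf1nn : ∀ k, 0 ≤ f1 k := fun k =>
    mul_nonneg (Real.rpow_pos_of_pos (S17.jap2_pos k) _).le
      (Real.rpow_pos_of_pos (S17.jap2_pos (n-k)) _).le
  have hf2nn : ∀ k, 0 ≤ f2 k := fun k =>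
    mul_nonneg (Real.rpow_pos_of_pos (S17.jap2_pos k) _).le
      (Real.rpow_pos_of_pos (S17.jap2_pos (n-k)) _).le
  have hpt : ∀ k : ℤ × ℤ,
      Set.indicator {k : ℤ × ℤ | M ≤ max (norm2 k) (norm2 (n - k))}
        (fun k => jap2 k ^ (-δ) * jap2 (n - k) ^ (-(2 : ℝ))) k
      ≤ W ^ (-ρ) * (f1 k + f2 k) := by
    intro k
    have hk0 := S17.jap2_pos k
    have hnk0 := S17.jap2_pos (n-k)
    rw [Set.indicator_apply]
    split_ifs with h
    · have h' : M ≤ max (norm2 k) (norm2 (n - k)) := h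
      rcases le_max_iff.1 h' with hc | hc
      · -- W ≤ jap2 k
        have hWk : W ≤ jap2 k := by
          rw [hWdef, S17.jap2_eq_japR_norm2 k]
          exact S17.japR_mono hM hc
        have e1 : jap2 k ^ (-δ) = jap2 k ^ (-ρ) * jap2 k ^ (-(δ - ρ)) := by
          rw [← Real.rpow_add hk0]; ring_nf
        have e2 : jap2 k ^ (-ρ) ≤ W ^ (-ρ) :=
          Real.rpow_le_rpow_of_nonpos hW0 hWk (by linarith)
        have step : jap2 k ^ (-δ) * jap2 (n - k) ^ (-(2:ℝ)) ≤ W ^ (-ρ) * f1 k := by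
          rw [e1, hf1]
          calc jap2 k ^ (-ρ) * jap2 k ^ (-(δ - ρ)) * jap2 (n - k) ^ (-(2:ℝ))
              = jap2 k ^ (-ρ) * (jap2 k ^ (-(δ - ρ)) * jap2 (n - k) ^ (-(2:ℝ))) := by ring
            _ ≤ W ^ (-ρ) * (jap2 k ^ (-(δ - ρ)) * jap2 (n - k) ^ (-(2:ℝ))) :=
                mul_le_mul_of_nonneg_right e2
                  (mul_nonneg (Real.rpow_pos_of_pos hk0 _).le
                    (Real.rpow_pos_of_pos hnk0 _).le)
        calc jap2 k ^ (-δ) * jap2 (n - k) ^ (-(2:ℝ)) ≤ W ^ (-ρ) * f1 k := step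
          _ ≤ W ^ (-ρ) * (f1 k + f2 k) := by
              have := mul_nonneg hWnr.le (hf2nn k)
              nlinarith [hf2nn k, hWnr]
      · -- W ≤ jap2 (n-k)
        have hWk : W ≤ jap2 (n - k) := by
          rw [hWdef, S17.jap2_eq_japR_norm2 (n - k)]
          exact S17.japR_mono hM hc
        have e1 : jap2 (n-k) ^ (-(2:ℝ)) = jap2 (n-k) ^ (-ρ) * jap2 (n-k) ^ (-(2 - ρ)) := by
          rw [← Real.rpow_add hnk0]; ring_nf
        have e2 : jap2 (n-k) ^ (-ρ) ≤ W ^ (-ρ) :=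
          Real.rpow_le_rpow_of_nonpos hW0 hWk (by linarith)
        have step : jap2 k ^ (-δ) * jap2 (n - k) ^ (-(2:ℝ)) ≤ W ^ (-ρ) * f2 k := by
          rw [e1, hf2]
          calc jap2 k ^ (-δ) * (jap2 (n-k) ^ (-ρ) * jap2 (n-k) ^ (-(2 - ρ)))
              = jap2 (n-k) ^ (-ρ) * (jap2 k ^ (-δ) * jap2 (n-k) ^ (-(2 - ρ))) := by ring
            _ ≤ W ^ (-ρ) * (jap2 k ^ (-δ) * jap2 (n-k) ^ (-(2 - ρ))) :=
                mul_le_mul_of_nonneg_right e2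
                  (mul_nonneg (Real.rpow_pos_of_pos hk0 _).le
                    (Real.rpow_pos_of_pos hnk0 _).le)
        calc jap2 k ^ (-δ) * jap2 (n - k) ^ (-(2:ℝ)) ≤ W ^ (-ρ) * f2 k := step
          _ ≤ W ^ (-ρ) * (f1 k + f2 k) := by
              nlinarith [hf1nn k, hWnr]
    · exact mul_nonneg hWnr.le (by
        have := hf1nn k
        have := hf2nn k
        linarith)
  have hsum : ∑ k ∈ u, Set.indicator {k : ℤ × ℤ | M ≤ max (norm2 k) (norm2 (n - k))}
        (fun k => jap2 k ^ (-δ) * jap2 (n - k) ^ (-(2 : ℝ))) k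
      ≤ W ^ (-ρ) * ((∑ k ∈ u, f1 k) + (∑ k ∈ u, f2 k)) := by
    calc ∑ k ∈ u, Set.indicator {k : ℤ × ℤ | M ≤ max (norm2 k) (norm2 (n - k))}
          (fun k => jap2 k ^ (-δ) * jap2 (n - k) ^ (-(2 : ℝ))) k
        ≤ ∑ k ∈ u, W ^ (-ρ) * (f1 k + f2 k) := Finset.sum_le_sum fun k _ => hpt k
      _ = W ^ (-ρ) * ((∑ k ∈ u, f1 k) + (∑ k ∈ u, f2 k)) := by
          rw [← Finset.mul_sum, Finset.sum_add_distrib]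
  have hB1 : ∑ k ∈ u, f1 k ≤ C₁ * L * T ^ (ρ - δ) := by
    have := H₁ n u
    rw [show (2 - (δ - ρ + 2)) = ρ - δ by ring] at this
    rw [hf1, hLdef, hTdef]
    exact this
  have hB2 : ∑ k ∈ u, f2 k ≤ C₂ * L * T ^ (ρ - δ) := by
    have := H₂ n u
    rw [show (2 - (δ + (2 - ρ))) = ρ - δ by ring] at this
    rw [hf2, hLdef, hTdef]
    exact this
  have hTr : (0:ℝ) < T ^ (ρ - δ) := Real.rpow_pos_of_pos hT0 _
  have hfinal : W ^ (-ρ) * ((∑ k ∈ u, f1 k) + (∑ k ∈ u, f2 k))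
      ≤ (C₁ + C₂) * L / (T ^ (δ - ρ) * W ^ ρ) := by
    have h1 : W ^ (-ρ) * ((∑ k ∈ u, f1 k) + (∑ k ∈ u, f2 k))
        ≤ W ^ (-ρ) * ((C₁ + C₂) * L * T ^ (ρ - δ)) := by
      apply mul_le_mul_of_nonneg_left _ hWnr.le
      calc (∑ k ∈ u, f1 k) + (∑ k ∈ u, f2 k)
          ≤ C₁ * L * T ^ (ρ - δ) + C₂ * L * T ^ (ρ - δ) := add_le_add hB1 hB2
        _ = (C₁ + C₂) * L * T ^ (ρ - δ) := by ring
    have h2 : W ^ (-ρ) * ((C₁ + C₂) * L * T ^ (ρ - δ))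
        = (C₁ + C₂) * L / (T ^ (δ - ρ) * W ^ ρ) := by
      rw [show (ρ - δ) = -(δ - ρ) by ring, Real.rpow_neg hT0.le,
        Real.rpow_neg hW0.le, div_eq_mul_inv, mul_inv]
      ring
    exact le_of_le_of_eq h1 h2
  exact hsum.trans hfinal
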